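/- arXiv:2007.08137 — 5 statements merged into one kernel-verified Lean document; each statement's English description precedes it below -/
import Mathlib

section
/- Let G_1,...,G_n ∈ R^d, let G* ∈ R^d, and let s, s̃ be probability weight vectors on [n] with total variation distance at most ε such that λ_max(Σ_i s_i G_i G_i^T) ≤ C · λ_max(Σ_i s̃_i G_i G_i^T) for some C ≥ 1. Then ‖Σ_i s_i G_i − G*‖ ≤ ‖Σ_i s̃_i G_i − G*‖ + sqrt(2(C+1) ε λ_max(Σ_i s̃_i G_i G_i^T)). -/
open scoped BigOperators RealInnerProductSpace

/-- Largest eigenvalue (Rayleigh quotient supremum) of a matrix. -/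
noncomputable def lamMax {d : ℕ} (A : Matrix (Fin d) (Fin d) ℝ) : ℝ :=
  sSup {r : ℝ | ∃ v : Fin d → ℝ, (∑ i, v i ^ 2) = 1 ∧ r = ∑ i, ∑ j, v i * A i j * v j}

lemma lamMax_bddAbove {d : ℕ} (A : Matrix (Fin d) (Fin d) ℝ) :
    BddAbove {r : ℝ | ∃ v : Fin d → ℝ, (∑ i, v i ^ 2) = 1 ∧
      r = ∑ i, ∑ j, v i * A i j * v j} := by
  refine ⟨∑ i, ∑ j, |A i j|, ?_⟩
  rintro r ⟨v, hv, rfl⟩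
  have hva : ∀ a, |v a| ≤ 1 := by
    intro a
    have h1 : v a ^ 2 ≤ 1 := by
      rw [← hv]
      exact Finset.single_le_sum (f := fun i => v i ^ 2) (fun i _ => sq_nonneg _)
        (Finset.mem_univ a)
    exact (sq_le_one_iff_abs_le_one (v a)).1 h1
  refine Finset.sum_le_sum fun i _ => Finset.sum_le_sum fun j _ => ?_
  calc v i * A i j * v j ≤ |v i * A i j * v j| := le_abs_self _
    _ = |v i| * |A i j| * |v j| := by rw [abs_mul, abs_mul]
    _ ≤ 1 * |A i j| * 1 := by
        apply mul_le_mul (mul_le_mul (hva i) le_rfl (abs_nonneg _) zero_le_one) (hva j)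
          (abs_nonneg _)
        positivity
    _ = |A i j| := by ring

lemma quad_form {n d : ℕ} (G : Fin n → EuclideanSpace ℝ (Fin d)) (w : Fin n → ℝ)
    (v : Fin d → ℝ) :
    (∑ a, ∑ b, v a * (∑ i, w i • Matrix.of fun a b => G i a * G i b) a b * v b)
      = ∑ i, w i * (∑ a, G i a * v a) ^ 2 := by
  have h : ∀ i : Fin n, w i * (∑ a, G i a * v a) ^ 2
      = ∑ a, ∑ b, v a * (w i * (G i a * G i b)) * v b := by
    intro i
    rw [sq, Finset.sum_mul_sum, Finset.mul_sum]
    refine Finset.sum_congr rfl fun a _ => ?_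
    rw [Finset.mul_sum]
    exact Finset.sum_congr rfl fun b _ => by ring
  calc (∑ a, ∑ b, v a * (∑ i, w i • Matrix.of fun a b => G i a * G i b) a b * v b)
      = ∑ a, ∑ b, ∑ i, v a * (w i * (G i a * G i b)) * v b := by
        refine Finset.sum_congr rfl fun a _ => Finset.sum_congr rfl fun b _ => ?_
        simp only [Matrix.sum_apply, Matrix.smul_apply, Matrix.of_apply, smul_eq_mul,
          Finset.sum_mul, Finset.mul_sum]
    _ = ∑ a, ∑ i, ∑ b, v a * (w i * (G i a * G i b)) * v b :=
        Finset.sum_congr rfl fun a _ => Finset.sum_comm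
    _ = ∑ i, ∑ a, ∑ b, v a * (w i * (G i a * G i b)) * v b := Finset.sum_comm
    _ = ∑ i, w i * (∑ a, G i a * v a) ^ 2 :=
        Finset.sum_congr rfl fun i _ => (h i).symm

lemma rayleigh_le {n d : ℕ} (G : Fin n → EuclideanSpace ℝ (Fin d)) (w : Fin n → ℝ)
    (v : Fin d → ℝ) (hv : (∑ a, v a ^ 2) = 1) :
    (∑ i, w i * (∑ a, G i a * v a) ^ 2)
      ≤ lamMax (∑ i, w i • Matrix.of fun a b => G i a * G i b) :=
  le_csSup (lamMax_bddAbove _) ⟨v, hv, (quad_form G w v).symm⟩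

/-- Two weightings with small TV distance and comparable second moments give
nearby weighted means. -/
theorem weighted_mean_close_of_tv_close (n d : ℕ)
    (G : Fin n → EuclideanSpace ℝ (Fin d)) (Gstar : EuclideanSpace ℝ (Fin d))
    (s stilde : Fin n → ℝ)
    (hs : (∑ i, s i) = 1 ∧ ∀ i, 0 ≤ s i)
    (hstilde : (∑ i, stilde i) = 1 ∧ ∀ i, 0 ≤ stilde i)
    (ε C : ℝ) (hε : 0 ≤ ε) (hC : 1 ≤ C)
    (htv : (1 / 2) * ∑ i, |s i - stilde i| ≤ ε)
    (hcomp : lamMax (∑ i, s i • Matrix.of fun a b => G i a * G i b) ≤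
      C * lamMax (∑ i, stilde i • Matrix.of fun a b => G i a * G i b)) :
    ‖(∑ i, s i • G i) - Gstar‖ ≤ ‖(∑ i, stilde i • G i) - Gstar‖ +
      Real.sqrt (2 * (C + 1) * ε *
        lamMax (∑ i, stilde i • Matrix.of fun a b => G i a * G i b)) := by
  set A : EuclideanSpace ℝ (Fin d) := ∑ i, s i • G i with hA
  set B : EuclideanSpace ℝ (Fin d) := ∑ i, stilde i • G i with hB
  set lt : ℝ := lamMax (∑ i, stilde i • Matrix.of fun a b => G i a * G i b) with hlt
  have key : ‖A - B‖ ≤ Real.sqrt (2 * (C + 1) * ε * lt) := by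
    by_cases h0 : A - B = 0
    · rw [h0, norm_zero]; exact Real.sqrt_nonneg _
    · set t : ℝ := ‖A - B‖ with htdef
      have ht : 0 < t := norm_pos_iff.2 h0
      set u : EuclideanSpace ℝ (Fin d) := t⁻¹ • (A - B) with hu
      have hinner : ∀ x y : EuclideanSpace ℝ (Fin d), ⟪x, y⟫ = ∑ a, x a * y a := by
        intro x y
        simp [PiLp.inner_apply, RCLike.inner_apply, mul_comm]
      have hnormu : ‖u‖ = 1 := by
        rw [hu, norm_smul, norm_inv, norm_norm, ← htdef, inv_mul_cancel₀ ht.ne']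
      have hu2 : (∑ a, u a ^ 2) = 1 := by
        have h1 : (∑ a, u a * u a) = 1 := by
          rw [← hinner u u, real_inner_self_eq_norm_sq, hnormu]; norm_num
        simpa [sq] using h1
      set c : Fin n → ℝ := fun i => ∑ a, G i a * u a with hc
      have hrepA : ⟪A, u⟫ = ∑ i, s i * c i := by
        rw [hA, sum_inner]
        refine Finset.sum_congr rfl fun i _ => ?_
        rw [real_inner_smul_left, hinner]
      have hrepB : ⟪B, u⟫ = ∑ i, stilde i * c i := by
        rw [hB, sum_inner]
        refine Finset.sum_congr rfl fun i _ => ?_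
        rw [real_inner_smul_left, hinner]
      have hrep : t = ∑ i, (s i - stilde i) * c i := by
        have h1 : ⟪A - B, u⟫ = t := by
          rw [hu, real_inner_smul_right, real_inner_self_eq_norm_sq, ← htdef]
          field_simp
        rw [← h1, inner_sub_left, hrepA, hrepB, ← Finset.sum_sub_distrib]
        exact Finset.sum_congr rfl fun i _ => by ring
      have hS : (∑ i, s i * c i ^ 2)
          ≤ lamMax (∑ i, s i • Matrix.of fun a b => G i a * G i b) :=
        rayleigh_le G s (fun a => u a) hu2
      have hSt : (∑ i, stilde i * c i ^ 2) ≤ lt := rayleigh_le G stilde (fun a => u a) hu2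
      have habs : (∑ i, |s i - stilde i| * c i ^ 2) ≤ (C + 1) * lt := by
        calc (∑ i, |s i - stilde i| * c i ^ 2)
            ≤ ∑ i, (s i + stilde i) * c i ^ 2 := by
              refine Finset.sum_le_sum fun i _ => ?_
              refine mul_le_mul_of_nonneg_right ?_ (sq_nonneg _)
              have := abs_sub (s i) (stilde i)
              calc |s i - stilde i| ≤ |s i| + |stilde i| := abs_sub _ _
                _ = s i + stilde i := by rw [abs_of_nonneg (hs.2 i), abs_of_nonneg (hstilde.2 i)]
          _ = (∑ i, s i * c i ^ 2) + ∑ i, stilde i * c i ^ 2 := by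
              rw [← Finset.sum_add_distrib]
              exact Finset.sum_congr rfl fun i _ => by ring
          _ ≤ C * lt + lt := add_le_add (hS.trans hcomp) hSt
          _ = (C + 1) * lt := by ring
      have htv2 : (∑ i, |s i - stilde i|) ≤ 2 * ε := by linarith
      have hcs : t ^ 2 ≤ (∑ i, |s i - stilde i|) * ∑ i, |s i - stilde i| * c i ^ 2 := by
        have h1 : t ≤ ∑ i, Real.sqrt |s i - stilde i| * (Real.sqrt |s i - stilde i| * |c i|) := by
          rw [hrep]
          refine Finset.sum_le_sum fun i _ => ?_
          rw [← mul_assoc, Real.mul_self_sqrt (abs_nonneg _)]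
          calc (s i - stilde i) * c i ≤ |(s i - stilde i) * c i| := le_abs_self _
            _ = |s i - stilde i| * |c i| := abs_mul _ _
        have h2 := Finset.sum_mul_sq_le_sq_mul_sq Finset.univ
          (fun i => Real.sqrt |s i - stilde i|) (fun i => Real.sqrt |s i - stilde i| * |c i|)
        have h3 : (∑ i, (Real.sqrt |s i - stilde i|) ^ 2) = ∑ i, |s i - stilde i| := by
          exact Finset.sum_congr rfl fun i _ => Real.sq_sqrt (abs_nonneg _)
        have h4 : (∑ i, (Real.sqrt |s i - stilde i| * |c i|) ^ 2)
            = ∑ i, |s i - stilde i| * c i ^ 2 := by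
          refine Finset.sum_congr rfl fun i _ => ?_
          rw [mul_pow, Real.sq_sqrt (abs_nonneg _), sq_abs]
        rw [h3, h4] at h2
        calc t ^ 2 ≤ (∑ i, Real.sqrt |s i - stilde i| * (Real.sqrt |s i - stilde i| * |c i|)) ^ 2 := by
              apply pow_le_pow_left₀ ht.le h1
          _ ≤ _ := h2
      have hfin : t ^ 2 ≤ 2 * (C + 1) * ε * lt := by
        have hnn : (0:ℝ) ≤ ∑ i, |s i - stilde i| * c i ^ 2 :=
          Finset.sum_nonneg fun i _ => mul_nonneg (abs_nonneg _) (sq_nonneg _)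
        calc t ^ 2 ≤ (∑ i, |s i - stilde i|) * ∑ i, |s i - stilde i| * c i ^ 2 := hcs
          _ ≤ (2 * ε) * ((C + 1) * lt) := by
              apply mul_le_mul htv2 habs hnn (by linarith)
          _ = 2 * (C + 1) * ε * lt := by ring
      calc t = Real.sqrt (t ^ 2) := (Real.sqrt_sq ht.le).symm
        _ ≤ Real.sqrt (2 * (C + 1) * ε * lt) := Real.sqrt_le_sqrt hfin
  have htri : ‖A - Gstar‖ ≤ ‖B - Gstar‖ + ‖A - B‖ := by
    have : A - Gstar = (B - Gstar) + (A - B) := by abel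
    rw [this]
    exact norm_add_le _ _
  calc ‖A - Gstar‖ ≤ ‖B - Gstar‖ + ‖A - B‖ := htri
    _ ≤ ‖B - Gstar‖ + Real.sqrt (2 * (C + 1) * ε * lt) := by linarith
end

section
/- Consider the iteration w_{t+1} = w_t − (Σ(w_t − w*) + e_t) in R^d, where Σ is symmetric with 1/κ ≤ λ_min(Σ) and ‖Σ‖ = 1, and the error sequence satisfies ‖e_t‖ ≤ c(‖w_t − w*‖ + σ) with c < 1/(2κ). Then for all t, ‖w_t − w*‖ ≤ e^{−t/(2κ)} ‖w_0 − w*‖ + 4cσκ. -/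
open scoped InnerProductSpace

/-- The spectral (operator) norm of a real matrix, via its action on Euclidean space. -/
noncomputable def specNorm {d : ℕ} (A : Matrix (Fin d) (Fin d) ℝ) : ℝ :=
  ‖Matrix.toEuclideanCLM (𝕜 := ℝ) A‖

set_option maxHeartbeats 1000000 in
/-- Inexact gradient descent: for the iteration
`w_{t+1} = w_t − (Σ(w_t − w*) + e_t)` with `1/κ ≤ λ_min(Σ)`, `‖Σ‖ = 1` and
`‖e_t‖ ≤ c(‖w_t − w*‖ + σ)`, `c < 1/(2κ)`, one has
`‖w_t − w*‖ ≤ e^{−t/(2κ)}‖w_0 − w*‖ + 4cσκ` for all `t`. -/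
theorem gradient_descent_with_errors (d : ℕ)
    (Smat : Matrix (Fin d) (Fin d) ℝ) (hsymm : Smat.IsSymm)
    (κ c σ : ℝ) (hκ : 0 < κ) (hc : 0 < c) (hσ : 0 < σ)
    (hmin : ∀ v : EuclideanSpace ℝ (Fin d),
      (1 / κ) * ‖v‖ ^ 2 ≤ ⟪v, Matrix.toEuclideanLin Smat v⟫_ℝ)
    (hnorm : specNorm Smat = 1)
    (hcκ : c < 1 / (2 * κ))
    (w : ℕ → EuclideanSpace ℝ (Fin d)) (wstar : EuclideanSpace ℝ (Fin d))
    (e : ℕ → EuclideanSpace ℝ (Fin d))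
    (he : ∀ t, ‖e t‖ ≤ c * (‖w t - wstar‖ + σ))
    (hiter : ∀ t, w (t + 1) = w t - (Matrix.toEuclideanLin Smat (w t - wstar) + e t)) :
    ∀ t : ℕ, ‖w t - wstar‖ ≤
      Real.exp (-(t : ℝ) / (2 * κ)) * ‖w 0 - wstar‖ + 4 * c * σ * κ := by
  set T : EuclideanSpace ℝ (Fin d) →ₗ[ℝ] EuclideanSpace ℝ (Fin d) :=
    Matrix.toEuclideanLin Smat with hT
  have hTsym : T.IsSymmetric := by
    rw [hT, ← Matrix.isHermitian_iff_isSymmetric]; exact hsymm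
  -- operator norm bound: ‖T v‖ ≤ ‖v‖
  have hTle : ∀ v : EuclideanSpace ℝ (Fin d), ‖T v‖ ≤ ‖v‖ := by
    intro v
    have h1 : T v = Matrix.toEuclideanCLM (𝕜 := ℝ) Smat v := rfl
    calc ‖T v‖ = ‖Matrix.toEuclideanCLM (𝕜 := ℝ) Smat v‖ := by rw [h1]
      _ ≤ ‖Matrix.toEuclideanCLM (𝕜 := ℝ) Smat‖ * ‖v‖ :=
        (Matrix.toEuclideanCLM (𝕜 := ℝ) Smat).le_opNorm v
      _ = ‖v‖ := by rw [show ‖Matrix.toEuclideanCLM (𝕜 := ℝ) Smat‖ = specNorm Smat from rfl,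
            hnorm, one_mul]
  -- the residual bilinear form B u v = ⟪u, v - T v⟫
  set B : EuclideanSpace ℝ (Fin d) → EuclideanSpace ℝ (Fin d) → ℝ :=
    fun u v => ⟪u, v - T v⟫_ℝ with hB
  have hBsymm : ∀ u v, B u v = B v u := by
    intro u v
    have hswap : ⟪u, T v⟫_ℝ = ⟪v, T u⟫_ℝ := by
      rw [← hTsym u v, real_inner_comm]
    simp only [hB]
    rw [inner_sub_right, inner_sub_right, hswap, real_inner_comm u v]
  have hBvv : ∀ v, B v v = ‖v‖ ^ 2 - ⟪v, T v⟫_ℝ := by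
    intro v
    simp only [hB]
    rw [inner_sub_right, real_inner_self_eq_norm_sq]
  have hBpos : ∀ v, 0 ≤ B v v := by
    intro v
    have h1 : ⟪v, T v⟫_ℝ ≤ ‖v‖ ^ 2 := by
      calc ⟪v, T v⟫_ℝ ≤ ‖v‖ * ‖T v‖ := real_inner_le_norm v (T v)
        _ ≤ ‖v‖ ^ 2 := by nlinarith [hTle v, norm_nonneg v]
    rw [hBvv]; linarith
  have hBadd : ∀ u v x, B (u + v) x = B u x + B v x := by
    intro u v x; simp only [hB]; rw [inner_add_left]
  have hBsmul : ∀ (r : ℝ) u v, B (r • u) v = r * B u v := by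
    intro r u v; simp only [hB]; rw [real_inner_smul_left]
  have hBadd' : ∀ u v x, B x (u + v) = B x u + B x v := by
    intro u v x; rw [hBsymm, hBadd, hBsymm u x, hBsymm v x]
  have hBsmul' : ∀ (r : ℝ) u v, B u (r • v) = r * B u v := by
    intro r u v; rw [hBsymm, hBsmul, hBsymm v u]
  -- Cauchy–Schwarz for B
  have hCS : ∀ u v, B u v ^ 2 ≤ B u u * B v v := by
    intro u v
    have key : ∀ x : ℝ, 0 ≤ B v v * (x * x) + (2 * B u v) * x + B u u := by
      intro x
      have h0 := hBpos (u + x • v)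
      have e1 : B (u + x • v) (u + x • v)
          = B v v * (x * x) + (2 * B u v) * x + B u u := by
        simp only [hBadd, hBadd', hBsmul, hBsmul']
        rw [hBsymm v u]
        ring
      rw [e1] at h0
      exact h0
    have hd := discrim_le_zero key
    rw [discrim] at hd
    nlinarith [hd]
  -- upper bound on the quadratic form of B
  have hM : ∀ v, B v v ≤ (1 - 1/κ) * ‖v‖ ^ 2 := by
    intro v
    have h1 := hmin v
    rw [hBvv]; linarith
  -- pointwise contraction: ‖v - T v‖ ≤ (1 - 1/κ) ‖v‖
  have hcontract : κ ≥ 1 → ∀ v : EuclideanSpace ℝ (Fin d),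
      ‖v - T v‖ ≤ (1 - 1/κ) * ‖v‖ := by
    intro hκ1 v
    have hM0 : 0 ≤ 1 - 1/κ := by
      have h0 : 1/κ ≤ 1 := by rw [div_le_one hκ]; exact hκ1
      linarith
    have h1 : ‖v - T v‖ ^ 2 = B (v - T v) v := by
      simp only [hB]
      exact (real_inner_self_eq_norm_sq _).symm
    have h2 := hCS (v - T v) v
    rw [← h1] at h2
    have h3 : B (v - T v) (v - T v) ≤ (1 - 1/κ) * ‖v - T v‖ ^ 2 := hM (v - T v)
    have h4 : B v v ≤ (1 - 1/κ) * ‖v‖ ^ 2 := hM v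
    have h5 : (‖v - T v‖ ^ 2) ^ 2 ≤ (1 - 1/κ) ^ 2 * ‖v - T v‖ ^ 2 * ‖v‖ ^ 2 := by
      nlinarith [hBpos (v - T v), hBpos v, sq_nonneg ‖v - T v‖, sq_nonneg ‖v‖,
        mul_nonneg hM0 (sq_nonneg ‖v - T v‖), mul_nonneg hM0 (sq_nonneg ‖v‖)]
    have h6 : ‖v - T v‖ ^ 2 ≤ ((1 - 1/κ) * ‖v‖) ^ 2 := by
      rcases eq_or_lt_of_le (norm_nonneg (v - T v)) with h | h
      · rw [← h]; nlinarith [sq_nonneg ((1 - 1/κ) * ‖v‖)]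
      · have hpos : 0 < ‖v - T v‖ ^ 2 := by positivity
        nlinarith [h5]
    calc ‖v - T v‖ = Real.sqrt (‖v - T v‖ ^ 2) := by
          rw [Real.sqrt_sq (norm_nonneg _)]
      _ ≤ Real.sqrt (((1 - 1/κ) * ‖v‖) ^ 2) := Real.sqrt_le_sqrt h6
      _ = (1 - 1/κ) * ‖v‖ := Real.sqrt_sq (by positivity)
  -- main induction
  rcases Nat.eq_zero_or_pos d with hd | hd
  · -- d = 0: the space is trivial
    subst hd
    intro t
    have hz : w t - wstar = 0 := Subsingleton.elim _ _
    rw [hz, norm_zero]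
    positivity
  · -- d ≥ 1: κ ≥ 1
    have hκ1 : κ ≥ 1 := by
      set v : EuclideanSpace ℝ (Fin d) := EuclideanSpace.single ⟨0, hd⟩ 1 with hv
      have hv1 : ‖v‖ = 1 := by simp [hv, EuclideanSpace.norm_single]
      have h1 := hmin v
      have h2 : ⟪v, T v⟫_ℝ ≤ 1 := by
        calc ⟪v, T v⟫_ℝ ≤ ‖v‖ * ‖T v‖ := real_inner_le_norm v (T v)
          _ ≤ ‖v‖ * ‖v‖ := by nlinarith [hTle v, norm_nonneg v]
          _ = 1 := by rw [hv1]; ring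
      rw [hv1] at h1
      have h3 : 1 / κ ≤ 1 := by nlinarith [le_trans h1 h2]
      exact (div_le_one hκ).mp h3
    set ρ : ℝ := 1 - 1/(2*κ) with hρ
    have hinv : 0 < 1/(2*κ) := by positivity
    have hinv1 : 1/(2*κ) ≤ 1 := by
      rw [div_le_one (by linarith)]; linarith
    have hρ0 : 0 ≤ ρ := by rw [hρ]; linarith
    -- one-step recursion
    have hstep : ∀ t, ‖w (t+1) - wstar‖ ≤ ρ * ‖w t - wstar‖ + c * σ := by
      intro t
      have hre : w (t+1) - wstar = ((w t - wstar) - T (w t - wstar)) - e t := by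
        rw [hiter t]; abel
      calc ‖w (t+1) - wstar‖ = ‖((w t - wstar) - T (w t - wstar)) - e t‖ := by rw [hre]
        _ ≤ ‖(w t - wstar) - T (w t - wstar)‖ + ‖e t‖ := norm_sub_le _ _
        _ ≤ (1 - 1/κ) * ‖w t - wstar‖ + c * (‖w t - wstar‖ + σ) := by
            exact add_le_add (hcontract hκ1 _) (he t)
        _ ≤ ρ * ‖w t - wstar‖ + c * σ := by
            have h1 : 1 - 1/κ + c ≤ ρ := by
              have h2 : 1/κ = 2 * (1/(2*κ)) := by field_simp
              rw [hρ]; linarith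
            nlinarith [norm_nonneg (w t - wstar)]
    have hcσκ : 0 < 2 * c * σ * κ := by positivity
    -- induction: ‖w t - wstar‖ ≤ ρ^t ‖w 0 - wstar‖ + 2cσκ
    have hind : ∀ t, ‖w t - wstar‖ ≤ ρ ^ t * ‖w 0 - wstar‖ + 2 * c * σ * κ := by
      intro t
      induction t with
      | zero => simp; linarith
      | succ n ih =>
        have hkey : 2 * c * σ * κ * ρ + c * σ = 2 * c * σ * κ := by
          rw [hρ]; field_simp; ring
        calc ‖w (n+1) - wstar‖ ≤ ρ * ‖w n - wstar‖ + c * σ := hstep n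
          _ ≤ ρ * (ρ ^ n * ‖w 0 - wstar‖ + 2 * c * σ * κ) + c * σ :=
            by nlinarith [norm_nonneg (w n - wstar)]
          _ = ρ ^ (n+1) * ‖w 0 - wstar‖ + (2 * c * σ * κ * ρ + c * σ) := by ring
          _ = ρ ^ (n+1) * ‖w 0 - wstar‖ + 2 * c * σ * κ := by rw [hkey]
    intro t
    have hexp : ρ ^ t ≤ Real.exp (-(t : ℝ) / (2 * κ)) := by
      have h1 : ρ ≤ Real.exp (-(1/(2*κ))) := by
        have h2 := Real.add_one_le_exp (-(1/(2*κ)))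
        rw [hρ]; linarith
      calc ρ ^ t ≤ (Real.exp (-(1/(2*κ)))) ^ t := pow_le_pow_left₀ hρ0 h1 t
        _ = Real.exp ((t : ℝ) * (-(1/(2*κ)))) := by rw [Real.exp_nat_mul]
        _ = Real.exp (-(t : ℝ) / (2 * κ)) := by congr 1; ring
    calc ‖w t - wstar‖ ≤ ρ ^ t * ‖w 0 - wstar‖ + 2 * c * σ * κ := hind t
      _ ≤ Real.exp (-(t : ℝ) / (2 * κ)) * ‖w 0 - wstar‖ + 4 * c * σ * κ := by
        have h1 : ρ ^ t * ‖w 0 - wstar‖ ≤ Real.exp (-(t : ℝ) / (2 * κ)) * ‖w 0 - wstar‖ :=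
          mul_le_mul_of_nonneg_right hexp (norm_nonneg _)
        linarith
end

section
/- Let X be a random vector in R^d with E[XX^T] = Σ, ‖Σ‖ = 1, and L4-L2 hypercontractivity constant τ (E[⟨u,X⟩^4] ≤ τ (E[⟨u,X⟩^2])^2 for all unit u). Let C > √τ and condition on the event S_C = {‖X‖ ≤ C√d}. Then (1 − √τ/C) Σ ⪯ E[XX^T | S_C] ⪯ (1 − C^{−2})^{−1} Σ. -/
open MeasureTheory
open scoped InnerProductSpace

lemma aux_sq_expand {d : ℕ} (x f : Fin d → ℝ) :
    (∑ i, x i * f i) ^ 2 = ∑ i, ∑ j, x i * ((f i * f j) * x j) := by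
  rw [sq, Finset.sum_mul_sum]
  refine Finset.sum_congr rfl fun i _ => Finset.sum_congr rfl fun j _ => by ring

lemma aux_quadform {Ω : Type*} [MeasurableSpace Ω] (ν : Measure Ω) {d : ℕ}
    (f : Fin d → Ω → ℝ) (h : ∀ i j, Integrable (fun ω => f i ω * f j ω) ν) (x : Fin d → ℝ) :
    dotProduct x ((Matrix.of fun i j => ∫ ω, f i ω * f j ω ∂ν).mulVec x)
      = ∫ ω, (∑ i, x i * f i ω) ^ 2 ∂ν := by
  simp only [dotProduct, Matrix.mulVec, Matrix.of_apply]
  have : ∀ ω, (∑ i, x i * f i ω) ^ 2 = ∑ i, ∑ j, x i * ((f i ω * f j ω) * x j) :=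
    fun ω => aux_sq_expand x fun i => f i ω
  simp_rw [this]
  rw [integral_finset_sum _ (fun i _ => integrable_finset_sum _ (fun j _ => by
    simpa [mul_assoc] using ((h i j).mul_const (x j)).const_mul (x i)))]
  refine Finset.sum_congr rfl fun i _ => ?_
  rw [integral_finset_sum _ (fun j _ => by
    simpa [mul_assoc] using ((h i j).mul_const (x j)).const_mul (x i)), Finset.mul_sum]
  refine Finset.sum_congr rfl fun j _ => ?_
  rw [integral_const_mul, integral_mul_const]

lemma aux_key {Ω : Type*} [MeasurableSpace Ω] (μ : Measure Ω) [IsFiniteMeasure μ]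
    (Y : Ω → ℝ) (hY2 : Integrable (fun ω => Y ω ^ 2) μ) (hY4 : Integrable (fun ω => Y ω ^ 4) μ)
    (T : Set Ω) (hT : MeasurableSet T) :
    ∫ ω in T, Y ω ^ 2 ∂μ ≤ Real.sqrt ((∫ ω, Y ω ^ 4 ∂μ) * (μ T).toReal) := by
  set A := ∫ ω, Y ω ^ 4 ∂μ with hA_def
  set q := (μ T).toReal with hq_def
  have hA0 : 0 ≤ A := integral_nonneg fun ω => by positivity
  have hq0 : 0 ≤ q := ENNReal.toReal_nonneg
  have hind : Integrable (T.indicator fun _ => (1:ℝ)) μ := (integrable_const 1).indicator hT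
  have step : ∀ t : ℝ, 0 < t → ∫ ω in T, Y ω ^ 2 ∂μ ≤ (t * A + t⁻¹ * q) / 2 := by
    intro t ht
    rw [← integral_indicator hT]
    have hle : ∀ ω, T.indicator (fun ω => Y ω ^ 2) ω
        ≤ (t * Y ω ^ 4 + t⁻¹ * T.indicator (fun _ => (1:ℝ)) ω) / 2 := by
      intro ω
      by_cases hω : ω ∈ T
      · simp only [Set.indicator_of_mem hω]
        have h1 : t * t⁻¹ = 1 := mul_inv_cancel₀ (ne_of_gt ht)
        nlinarith [sq_nonneg (t * Y ω ^ 2 - 1), ht]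
      · simp only [Set.indicator_of_notMem hω]
        have : 0 ≤ Y ω ^ 4 := by positivity
        nlinarith [ht, inv_pos.mpr ht]
    calc ∫ ω, T.indicator (fun ω => Y ω ^ 2) ω ∂μ
        ≤ ∫ ω, (t * Y ω ^ 4 + t⁻¹ * T.indicator (fun _ => (1:ℝ)) ω) / 2 ∂μ := by
          refine integral_mono (hY2.indicator hT) ?_ hle
          exact ((hY4.const_mul t).add (hind.const_mul t⁻¹)).div_const 2
      _ = (t * A + t⁻¹ * q) / 2 := by
          rw [integral_div, integral_add (hY4.const_mul t) (hind.const_mul t⁻¹),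
            integral_const_mul, integral_const_mul, integral_indicator_const _ hT]
          simp [hq_def, hA_def, Measure.real]
  by_cases hA : A = 0
  · have hY40 : (fun ω => Y ω ^ 4) =ᵐ[μ] 0 :=
      (integral_eq_zero_iff_of_nonneg (fun ω => by positivity) hY4).mp hA
    have hY20 : (fun ω => Y ω ^ 2) =ᵐ[μ] 0 := by
      filter_upwards [hY40] with ω h
      have : Y ω = 0 := by
        have := pow_eq_zero_iff (n := 4) (by norm_num) |>.mp h
        exact this
      simp [this]
    have : ∫ ω in T, Y ω ^ 2 ∂μ = 0 := by
      rw [integral_congr_ae (ae_restrict_of_ae hY20)]; simp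
    rw [this]
    positivity
  · have hApos : 0 < A := lt_of_le_of_ne hA0 (Ne.symm hA)
    by_cases hq : q = 0
    · have hμT : μ T = 0 := by
        have := measure_ne_top μ T
        rw [hq_def] at hq
        exact (ENNReal.toReal_eq_zero_iff _).mp hq |>.resolve_right this
      rw [Measure.restrict_eq_zero.mpr hμT]
      simp [hq]
    · have hqpos : 0 < q := lt_of_le_of_ne hq0 (Ne.symm hq)
      have hsa : 0 < Real.sqrt A := Real.sqrt_pos.mpr hApos
      have hsq : 0 < Real.sqrt q := Real.sqrt_pos.mpr hqpos
      have ht : 0 < Real.sqrt q / Real.sqrt A := div_pos hsq hsa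
      have := step _ ht
      have hAs : Real.sqrt A ^ 2 = A := Real.sq_sqrt hA0
      have hqs : Real.sqrt q ^ 2 = q := Real.sq_sqrt hq0
      have heq : (Real.sqrt q / Real.sqrt A * A + (Real.sqrt q / Real.sqrt A)⁻¹ * q) / 2
          = Real.sqrt A * Real.sqrt q := by
        field_simp
        linear_combination (-(Real.sqrt q ^ 2)) * hAs + (-(Real.sqrt A ^ 2)) * hqs
      rw [heq] at this
      rw [Real.sqrt_mul hA0]
      exact this

lemma aux_scalar (τ C p q I IS E A : ℝ) (hτ : 0 < τ) (hC : Real.sqrt τ < C)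
    (hq0 : 0 ≤ q) (hpq : p + q = 1) (hqC : q ≤ C⁻¹ ^ 2) (hIpos : 0 < I)
    (hIS0 : 0 ≤ IS) (hISle : IS ≤ I) (hAτ : A ≤ τ * I ^ 2) (hIA : I ^ 2 ≤ A)
    (hE : E ≤ Real.sqrt (A * q)) (hsplit : IS + E = I) :
    (1 - Real.sqrt τ / C) * I ≤ p⁻¹ * IS ∧ p⁻¹ * IS ≤ (1 - C⁻¹ ^ 2)⁻¹ * I := by
  have hsqτ : 0 < Real.sqrt τ := Real.sqrt_pos.mpr hτ
  have hC0 : 0 < C := hsqτ.trans hC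
  have hτ1 : (1 : ℝ) ≤ τ := by nlinarith [mul_pos hIpos hIpos]
  have hC1 : 1 < C := by
    have h := Real.sqrt_le_sqrt hτ1
    rw [Real.sqrt_one] at h
    linarith
  have hCinv : C⁻¹ ^ 2 < 1 := by
    have h1 : C⁻¹ < 1 := by rw [inv_lt_one_iff₀]; right; exact hC1
    have h2 : 0 < C⁻¹ := inv_pos.mpr hC0
    nlinarith
  have hp_lb : 1 - C⁻¹ ^ 2 ≤ p := by linarith
  have hp_pos : 0 < p := by linarith
  have hp1 : p ≤ 1 := by linarith
  have hA0 : 0 ≤ A := le_trans (by positivity) hIA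
  have hsab : Real.sqrt (A * q) ≤ Real.sqrt τ * I * C⁻¹ := by
    have h1 : A * q ≤ (Real.sqrt τ * I * C⁻¹) ^ 2 := by
      have hm : A * q ≤ τ * I ^ 2 * C⁻¹ ^ 2 := mul_le_mul hAτ hqC hq0 (by positivity)
      calc A * q ≤ τ * I ^ 2 * C⁻¹ ^ 2 := hm
        _ = (Real.sqrt τ * I * C⁻¹) ^ 2 := by
            rw [mul_pow, mul_pow, Real.sq_sqrt (le_of_lt hτ)]
    calc Real.sqrt (A * q) ≤ Real.sqrt ((Real.sqrt τ * I * C⁻¹) ^ 2) := Real.sqrt_le_sqrt h1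
      _ = Real.sqrt τ * I * C⁻¹ := Real.sqrt_sq (by positivity)
  have hlb : (1 - Real.sqrt τ / C) * I ≤ IS := by
    have h2 : Real.sqrt τ * I * C⁻¹ = Real.sqrt τ / C * I := by field_simp
    nlinarith [hE, hsab]
  have hpi1 : 1 ≤ p⁻¹ := by nlinarith [mul_inv_cancel₀ (ne_of_gt hp_pos), inv_pos.mpr hp_pos]
  constructor
  · have h1 : IS ≤ p⁻¹ * IS := by
      calc IS = 1 * IS := (one_mul IS).symm
        _ ≤ p⁻¹ * IS := mul_le_mul_of_nonneg_right hpi1 hIS0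
    linarith
  · have h2 : p⁻¹ ≤ (1 - C⁻¹ ^ 2)⁻¹ := inv_anti₀ (by linarith) hp_lb
    calc p⁻¹ * IS ≤ (1 - C⁻¹ ^ 2)⁻¹ * IS := mul_le_mul_of_nonneg_right h2 hIS0
      _ ≤ (1 - C⁻¹ ^ 2)⁻¹ * I :=
          mul_le_mul_of_nonneg_left hISle (le_of_lt (inv_pos.mpr (by linarith)))

set_option maxHeartbeats 1000000 in
/-- Truncating a hypercontractive random vector at radius `C√d` does not distort its
second moment matrix much, in the Loewner order:
`(1 − √τ/C) Σ ⪯ E[XXᵀ | ‖X‖ ≤ C√d] ⪯ (1 − C⁻²)⁻¹ Σ`. -/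
theorem truncated_second_moment_loewner_bounds
    {Ω : Type*} [MeasureSpace Ω] (μ : Measure Ω) [IsProbabilityMeasure μ]
    {d : ℕ} (X : Ω → EuclideanSpace ℝ (Fin d)) (hX : Measurable X)
    (τ C : ℝ) (hτ : 0 < τ) (hC : Real.sqrt τ < C)
    (Smat : Matrix (Fin d) (Fin d) ℝ)
    (hSmat : ∀ i j, Smat i j = ∫ ω, X ω i * X ω j ∂μ)
    (htr : Smat.trace ≤ (d : ℝ))
    (hint2 : ∀ i j, Integrable (fun ω => X ω i * X ω j) μ)
    (hint4 : ∀ u : EuclideanSpace ℝ (Fin d), Integrable (fun ω => ⟪u, X ω⟫_ℝ ^ 4) μ)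
    (hhc : ∀ u : EuclideanSpace ℝ (Fin d), ‖u‖ = 1 →
      ∫ ω, ⟪u, X ω⟫_ℝ ^ 4 ∂μ ≤ τ * (∫ ω, ⟪u, X ω⟫_ℝ ^ 2 ∂μ) ^ 2) :
    Matrix.PosSemidef
        ((Matrix.of fun i j =>
            ((μ {ω | ‖X ω‖ ≤ C * Real.sqrt d}).toReal)⁻¹ *
              ∫ ω in {ω | ‖X ω‖ ≤ C * Real.sqrt d}, X ω i * X ω j ∂μ) -
          (1 - Real.sqrt τ / C) • Smat) ∧
      Matrix.PosSemidef
        ((1 - C⁻¹ ^ 2)⁻¹ • Smat -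
          Matrix.of fun i j =>
            ((μ {ω | ‖X ω‖ ≤ C * Real.sqrt d}).toReal)⁻¹ *
              ∫ ω in {ω | ‖X ω‖ ≤ C * Real.sqrt d}, X ω i * X ω j ∂μ) := by
  classical
  set S : Set Ω := {ω | ‖X ω‖ ≤ C * Real.sqrt d} with hS_def
  have hSmeas : MeasurableSet S := measurableSet_le hX.norm measurable_const
  have hsqτ : 0 < Real.sqrt τ := Real.sqrt_pos.mpr hτ
  have hC0 : 0 < C := hsqτ.trans hC
  set p := (μ S).toReal with hp_def
  set q := (μ Sᶜ).toReal with hq_def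
  have hpq : p + q = 1 := by
    have h := measure_add_measure_compl (μ := μ) hSmeas
    rw [measure_univ] at h
    calc p + q = ((μ S) + (μ Sᶜ)).toReal :=
          (ENNReal.toReal_add (measure_ne_top μ S) (measure_ne_top μ Sᶜ)).symm
      _ = 1 := by rw [h]; simp
  have hq0 : 0 ≤ q := ENNReal.toReal_nonneg
  -- Markov bound: q ≤ C⁻¹ ^ 2
  have hnormsq : ∀ ω, ∑ i, (X ω i) ^ 2 = ‖X ω‖ ^ 2 := by
    intro ω
    rw [EuclideanSpace.norm_eq, Real.sq_sqrt (by positivity)]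
    simp [sq_abs]
  have hdiagint : ∀ i : Fin d, Integrable (fun ω => (X ω i) ^ 2) μ := fun i => by
    simpa [sq] using hint2 i i
  have hgint : Integrable (fun ω => ∑ i, (X ω i) ^ 2) μ :=
    integrable_finset_sum _ fun i _ => hdiagint i
  have hgle : ∫ ω, (∑ i, (X ω i) ^ 2) ∂μ ≤ (d : ℝ) := by
    rw [integral_finset_sum _ fun i _ => hdiagint i]
    calc ∑ i, ∫ ω, (X ω i) ^ 2 ∂μ = ∑ i, Smat i i := by
          refine Finset.sum_congr rfl fun i _ => ?_
          rw [hSmat i i]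
          simp_rw [sq]
      _ = Smat.trace := by simp [Matrix.trace, Matrix.diag]
      _ ≤ (d : ℝ) := htr
  have hqC : q ≤ C⁻¹ ^ 2 := by
    rcases Nat.eq_zero_or_pos d with hd | hd
    · subst hd
      have hx0 : ∀ ω, ‖X ω‖ = 0 := by
        intro ω
        have hz : X ω = 0 := by ext i; exact Fin.elim0 i
        rw [hz, norm_zero]
      have hSc : Sᶜ = ∅ := by
        ext ω
        simp only [Set.mem_compl_iff, Set.mem_empty_iff_false, iff_false, not_not]
        show ‖X ω‖ ≤ C * Real.sqrt ((0 : ℕ) : ℝ)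
        rw [hx0 ω]
        positivity
      rw [hq_def, hSc]
      simpa using sq_nonneg C⁻¹
    · have hlow : C ^ 2 * d * q ≤ ∫ ω in Sᶜ, (∑ i, (X ω i) ^ 2) ∂μ := by
        refine setIntegral_ge_of_const_le_real hSmeas.compl (measure_ne_top μ _) ?_ hgint.integrableOn
        intro ω hω
        have hω' : C * Real.sqrt d < ‖X ω‖ := not_le.mp hω
        calc C ^ 2 * d = (C * Real.sqrt d) ^ 2 := by
              rw [mul_pow, Real.sq_sqrt (Nat.cast_nonneg d)]
          _ ≤ ‖X ω‖ ^ 2 := pow_le_pow_left₀ (by positivity) (le_of_lt hω') 2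
          _ = ∑ i, (X ω i) ^ 2 := (hnormsq ω).symm
      have hup : ∫ ω in Sᶜ, (∑ i, (X ω i) ^ 2) ∂μ ≤ ∫ ω, (∑ i, (X ω i) ^ 2) ∂μ :=
        setIntegral_le_integral hgint (Filter.Eventually.of_forall fun ω => by positivity)
      have hd0 : (0 : ℝ) < d := by exact_mod_cast hd
      have hchain : C ^ 2 * d * q ≤ (d : ℝ) := le_trans hlow (le_trans hup hgle)
      have hC2 : (0 : ℝ) < C ^ 2 := by positivity
      have h2 : C ^ 2 * q ≤ 1 := by nlinarith
      rw [inv_pow]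
      calc q = (C ^ 2)⁻¹ * (C ^ 2 * q) := by field_simp
        _ ≤ (C ^ 2)⁻¹ * 1 := mul_le_mul_of_nonneg_left h2 (le_of_lt (inv_pos.mpr hC2))
        _ = (C ^ 2)⁻¹ := mul_one _
  -- per-direction inequalities
  have hinner : ∀ (u : EuclideanSpace ℝ (Fin d)) ω, ⟪u, X ω⟫_ℝ = ∑ i, u i * X ω i := by
    intro u ω
    simp [PiLp.inner_apply, RCLike.inner_apply]
    exact Finset.sum_congr rfl fun i _ => mul_comm _ _
  have master : ∀ x : Fin d → ℝ,
      (1 - Real.sqrt τ / C) * (∫ ω, (∑ i, x i * X ω i) ^ 2 ∂μ)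
          ≤ p⁻¹ * ∫ ω in S, (∑ i, x i * X ω i) ^ 2 ∂μ ∧
        p⁻¹ * (∫ ω in S, (∑ i, x i * X ω i) ^ 2 ∂μ)
          ≤ (1 - C⁻¹ ^ 2)⁻¹ * ∫ ω, (∑ i, x i * X ω i) ^ 2 ∂μ := by
    intro x
    set u : EuclideanSpace ℝ (Fin d) := (WithLp.equiv 2 _).symm x with hu_def
    have hYu : ∀ ω, ⟪u, X ω⟫_ℝ = ∑ i, x i * X ω i := by
      intro ω
      rw [hinner u ω]
      rfl
    have hY2int : Integrable (fun ω => (∑ i, x i * X ω i) ^ 2) μ := by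
      have hfe : (fun ω => (∑ i, x i * X ω i) ^ 2)
          = fun ω => ∑ i, ∑ j, x i * ((X ω i * X ω j) * x j) := by
        funext ω
        exact aux_sq_expand x fun i => X ω i
      rw [hfe]
      exact integrable_finset_sum _ fun i _ => integrable_finset_sum _ fun j _ => by
        simpa [mul_assoc] using ((hint2 i j).mul_const (x j)).const_mul (x i)
    have hY4int : Integrable (fun ω => (∑ i, x i * X ω i) ^ 4) μ := by
      have h := hint4 u
      simp only [hYu] at h
      exact h
    have hI0 : 0 ≤ ∫ ω, (∑ i, x i * X ω i) ^ 2 ∂μ := integral_nonneg fun ω => sq_nonneg _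
    have hIS0 : 0 ≤ ∫ ω in S, (∑ i, x i * X ω i) ^ 2 ∂μ :=
      setIntegral_nonneg hSmeas fun ω _ => sq_nonneg _
    have hISle : (∫ ω in S, (∑ i, x i * X ω i) ^ 2 ∂μ) ≤ ∫ ω, (∑ i, x i * X ω i) ^ 2 ∂μ :=
      setIntegral_le_integral hY2int (.of_forall fun ω => sq_nonneg _)
    by_cases hI : (∫ ω, (∑ i, x i * X ω i) ^ 2 ∂μ) = 0
    · have hIS : (∫ ω in S, (∑ i, x i * X ω i) ^ 2 ∂μ) = 0 :=
        le_antisymm (hI ▸ hISle) hIS0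
      rw [hIS, hI]
      constructor <;> simp
    · have hIpos : 0 < ∫ ω, (∑ i, x i * X ω i) ^ 2 ∂μ := lt_of_le_of_ne hI0 (Ne.symm hI)
      have hn : 0 < ‖u‖ := by
        rcases (norm_nonneg u).lt_or_eq with h | h
        · exact h
        · exfalso
          apply hI
          have hu0 : u = 0 := norm_eq_zero.mp h.symm
          have hY0 : ∀ ω, (∑ i, x i * X ω i) = 0 := by
            intro ω
            rw [← hYu ω, hu0, inner_zero_left]
          simp [hY0]
      set v : EuclideanSpace ℝ (Fin d) := ‖u‖⁻¹ • u with hv_def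
      have hv : ‖v‖ = 1 := by
        rw [hv_def, norm_smul, norm_inv, norm_norm, inv_mul_cancel₀ (ne_of_gt hn)]
      have hvinner : ∀ ω, ⟪v, X ω⟫_ℝ = ‖u‖⁻¹ * ∑ i, x i * X ω i := by
        intro ω
        rw [hv_def, real_inner_smul_left, hYu ω]
      have hhcv := hhc v hv
      simp_rw [hvinner, mul_pow, integral_const_mul] at hhcv
      have hAτ : (∫ ω, (∑ i, x i * X ω i) ^ 4 ∂μ)
          ≤ τ * (∫ ω, (∑ i, x i * X ω i) ^ 2 ∂μ) ^ 2 := by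
        have habs : ∀ A I : ℝ, ‖u‖⁻¹ ^ 4 * A ≤ τ * (‖u‖⁻¹ ^ 2 * I) ^ 2 → A ≤ τ * I ^ 2 := by
          intro A I h
          have hne : ‖u‖ ≠ 0 := ne_of_gt hn
          have h2 := mul_le_mul_of_nonneg_left h (le_of_lt (pow_pos hn 4))
          calc A = ‖u‖ ^ 4 * (‖u‖⁻¹ ^ 4 * A) := by field_simp
            _ ≤ ‖u‖ ^ 4 * (τ * (‖u‖⁻¹ ^ 2 * I) ^ 2) := h2
            _ = τ * I ^ 2 := by field_simp
        exact habs _ _ hhcv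
      have hIA : (∫ ω, (∑ i, x i * X ω i) ^ 2 ∂μ) ^ 2 ≤ ∫ ω, (∑ i, x i * X ω i) ^ 4 ∂μ := by
        have h := aux_key μ (fun ω => ∑ i, x i * X ω i) hY2int hY4int Set.univ
          MeasurableSet.univ
        rw [Measure.restrict_univ, measure_univ] at h
        simp only [ENNReal.toReal_one, mul_one] at h
        have hA0 : 0 ≤ ∫ ω, (∑ i, x i * X ω i) ^ 4 ∂μ := integral_nonneg fun ω => by positivity
        calc (∫ ω, (∑ i, x i * X ω i) ^ 2 ∂μ) ^ 2
            ≤ Real.sqrt (∫ ω, (∑ i, x i * X ω i) ^ 4 ∂μ) ^ 2 := pow_le_pow_left₀ hI0 h 2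
          _ = ∫ ω, (∑ i, x i * X ω i) ^ 4 ∂μ := Real.sq_sqrt hA0
      have hE := aux_key μ (fun ω => ∑ i, x i * X ω i) hY2int hY4int Sᶜ hSmeas.compl
      rw [← hq_def] at hE
      have hsplit := integral_add_compl hSmeas hY2int
      exact aux_scalar τ C p q _ _ _ _ hτ hC hq0 hpq hqC hIpos hIS0 hISle hAτ hIA hE hsplit
  -- assemble
  set N : Matrix (Fin d) (Fin d) ℝ := Matrix.of fun i j => ∫ ω in S, X ω i * X ω j ∂μ
    with hN_def
  have hrestr : ∀ i j, Integrable (fun ω => X ω i * X ω j) (μ.restrict S) := fun i j =>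
    (hint2 i j).restrict
  have hN_qf : ∀ x : Fin d → ℝ,
      dotProduct x (N.mulVec x) = ∫ ω in S, (∑ i, x i * X ω i) ^ 2 ∂μ := fun x =>
    aux_quadform (μ.restrict S) _ hrestr x
  have hSmat_eq : Smat = Matrix.of fun i j => ∫ ω, X ω i * X ω j ∂μ := by
    ext i j
    exact hSmat i j
  have hSmat_qf : ∀ x : Fin d → ℝ,
      dotProduct x (Smat.mulVec x) = ∫ ω, (∑ i, x i * X ω i) ^ 2 ∂μ := by
    intro x
    rw [hSmat_eq]
    exact aux_quadform μ _ hint2 x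
  have hM1 : (Matrix.of fun i j => p⁻¹ * ∫ ω in S, X ω i * X ω j ∂μ) = p⁻¹ • N := by
    ext i j
    simp [hN_def]
  have hNsym : ∀ i j, N j i = N i j := by
    intro i j
    simp only [hN_def, Matrix.of_apply]
    simp_rw [mul_comm]
  have hSsym : ∀ i j, Smat j i = Smat i j := by
    intro i j
    rw [hSmat i j, hSmat j i]
    simp_rw [mul_comm]
  rw [hM1]
  constructor
  · refine Matrix.posSemidef_iff_dotProduct_mulVec.mpr ⟨?_, ?_⟩
    · apply Matrix.ext
      intro i j
      simp only [Matrix.conjTranspose_apply, Matrix.sub_apply, Matrix.smul_apply,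
        star_trivial, smul_eq_mul]
      rw [hNsym i j, hSsym i j]
    intro x
    have hx : star x = x := by
      funext i
      simp
    rw [hx, Matrix.sub_mulVec, dotProduct_sub, Matrix.smul_mulVec,
      Matrix.smul_mulVec, dotProduct_smul, dotProduct_smul,
      smul_eq_mul, smul_eq_mul, hN_qf, hSmat_qf]
    have h := (master x).1
    linarith
  · refine Matrix.posSemidef_iff_dotProduct_mulVec.mpr ⟨?_, ?_⟩
    · apply Matrix.ext
      intro i j
      simp only [Matrix.conjTranspose_apply, Matrix.sub_apply, Matrix.smul_apply,
        star_trivial, smul_eq_mul]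
      rw [hNsym i j, hSsym i j]
    intro x
    have hx : star x = x := by
      funext i
      simp
    rw [hx, Matrix.sub_mulVec, dotProduct_sub, Matrix.smul_mulVec,
      Matrix.smul_mulVec, dotProduct_smul, dotProduct_smul,
      smul_eq_mul, smul_eq_mul, hN_qf, hSmat_qf]
    have h := (master x).2
    linarith
end

section
/- Under the conditions of the previous truncation lemma, the truncated distribution retains hypercontractivity: for all unit u, E[⟨u,X⟩^4 | ‖X‖ ≤ C√d] ≤ (τ / (1 − C^{−2})) (1 − √τ/C)^{−2} (E[⟨u,X⟩^2 | ‖X‖ ≤ C√d])^2. -/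
open MeasureTheory
open scoped InnerProductSpace

lemma cs_aux {Ω : Type*} [MeasurableSpace Ω] (ν : Measure Ω) [IsFiniteMeasure ν]
    {g : Ω → ℝ} (hg : Integrable g ν) (hg2 : Integrable (fun ω => g ω ^ 2) ν) :
    (∫ ω, g ω ∂ν) ^ 2 ≤ (ν Set.univ).toReal * ∫ ω, g ω ^ 2 ∂ν := by
  by_cases hν : ν = 0
  · simp [hν]
  · have hcpos : (0:ℝ) < (ν Set.univ).toReal :=
      ENNReal.toReal_pos (Measure.measure_univ_ne_zero.mpr hν) (measure_ne_top ν _)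
    set c := (ν Set.univ).toReal with hc
    set m := ∫ ω, g ω ∂ν with hm
    have hA : Integrable (fun ω => c ^ 2 * g ω ^ 2) ν := hg2.const_mul _
    have hB : Integrable (fun ω => (2 * c * m) * g ω) ν := hg.const_mul _
    have key : (0:ℝ) ≤ ∫ ω, (c * g ω - m) ^ 2 ∂ν := integral_nonneg fun ω => sq_nonneg _
    have expand : ∫ ω, (c * g ω - m) ^ 2 ∂ν
        = c ^ 2 * (∫ ω, g ω ^ 2 ∂ν) - (2 * c * m) * m + m ^ 2 * c := by
      have h1 : (fun ω => (c * g ω - m) ^ 2)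
          = fun ω => (c ^ 2 * g ω ^ 2 - (2 * c * m) * g ω) + m ^ 2 := by
        funext ω; ring
      have hAB : Integrable (fun ω => c ^ 2 * g ω ^ 2 - (2 * c * m) * g ω) ν := hA.sub hB
      rw [h1, integral_add hAB (integrable_const _), integral_sub hA hB,
        integral_const_mul, integral_const_mul, integral_const, measureReal_def, ← hc, ← hm, smul_eq_mul]
      ring
    rw [expand] at key
    have h2 : c * m ^ 2 ≤ c * (c * ∫ ω, g ω ^ 2 ∂ν) := by nlinarith
    exact le_of_mul_le_mul_left h2 hcpos

set_option maxHeartbeats 1000000 in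
/-- The truncated distribution retains L4-L2 hypercontractivity: for all unit `u`,
`E[⟨u,X⟩⁴ | ‖X‖ ≤ C√d] ≤ (τ/(1−C⁻²))(1−√τ/C)⁻² (E[⟨u,X⟩² | ‖X‖ ≤ C√d])²`. -/
theorem truncated_hypercontractivity
    {Ω : Type*} [MeasureSpace Ω] (μ : Measure Ω) [IsProbabilityMeasure μ]
    {d : ℕ} (X : Ω → EuclideanSpace ℝ (Fin d)) (hX : Measurable X)
    (τ C : ℝ) (hτ : 0 < τ) (hC : Real.sqrt τ < C)
    (Smat : Matrix (Fin d) (Fin d) ℝ)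
    (hSmat : ∀ i j, Smat i j = ∫ ω, X ω i * X ω j ∂μ)
    (htr : Smat.trace ≤ (d : ℝ))
    (hint2 : ∀ i j, Integrable (fun ω => X ω i * X ω j) μ)
    (hint4 : ∀ u : EuclideanSpace ℝ (Fin d), Integrable (fun ω => ⟪u, X ω⟫_ℝ ^ 4) μ)
    (hhc : ∀ u : EuclideanSpace ℝ (Fin d),
      ∫ ω, ⟪u, X ω⟫_ℝ ^ 4 ∂μ ≤ τ * (∫ ω, ⟪u, X ω⟫_ℝ ^ 2 ∂μ) ^ 2) :
    ∀ u : EuclideanSpace ℝ (Fin d), ‖u‖ = 1 →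
      ((μ {ω | ‖X ω‖ ≤ C * Real.sqrt d}).toReal)⁻¹ *
          ∫ ω in {ω | ‖X ω‖ ≤ C * Real.sqrt d}, ⟪u, X ω⟫_ℝ ^ 4 ∂μ ≤
        (τ / (1 - C⁻¹ ^ 2)) * ((1 - Real.sqrt τ / C)⁻¹) ^ 2 *
          (((μ {ω | ‖X ω‖ ≤ C * Real.sqrt d}).toReal)⁻¹ *
            ∫ ω in {ω | ‖X ω‖ ≤ C * Real.sqrt d}, ⟪u, X ω⟫_ℝ ^ 2 ∂μ) ^ 2 := by
  intro u hu
  have hCpos : (0:ℝ) < C := lt_of_le_of_lt (Real.sqrt_nonneg τ) hC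
  set A : Set Ω := {ω | ‖X ω‖ ≤ C * Real.sqrt d} with hAdef
  have hmeasA : MeasurableSet A := measurableSet_le hX.norm measurable_const
  set Y : Ω → ℝ := fun ω => ⟪u, X ω⟫_ℝ with hYdef
  have hYm : Measurable Y := Measurable.inner measurable_const hX
  have hi4 : Integrable (fun ω => Y ω ^ 4) μ := hint4 u
  have hi2 : Integrable (fun ω => Y ω ^ 2) μ := by
    refine Integrable.mono' ((integrable_const (1:ℝ)).add hi4)
      ((hYm.pow_const 2).aestronglyMeasurable) (ae_of_all μ fun ω => ?_)
    have h' : ‖Y ω ^ 2‖ = Y ω ^ 2 := by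
      rw [Real.norm_eq_abs]; exact abs_of_nonneg (sq_nonneg _)
    rw [h']
    simp only [Pi.add_apply]
    nlinarith [sq_nonneg (Y ω ^ 2 - 1)]
  set m2 := ∫ ω, Y ω ^ 2 ∂μ with hm2def
  have hm2 : 0 ≤ m2 := integral_nonneg fun ω => sq_nonneg _
  set p := (μ A).toReal with hpdef
  set a := ∫ ω in A, Y ω ^ 2 ∂μ with hadef
  set f4 := ∫ ω in A, Y ω ^ 4 ∂μ with hf4def
  by_cases hm2z : m2 = 0
  · -- degenerate case: Y = 0 a.e.
    have hzero : (fun ω => Y ω ^ 2) =ᵐ[μ] 0 :=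
      (integral_eq_zero_iff_of_nonneg (fun ω => sq_nonneg _) hi2).mp hm2z
    have hY0 : Y =ᵐ[μ] 0 := by
      filter_upwards [hzero] with ω h
      exact (pow_eq_zero_iff two_ne_zero).mp h
    have h4 : f4 = 0 := by
      rw [hf4def]
      apply integral_eq_zero_of_ae
      filter_upwards [ae_restrict_of_ae hY0] with ω h
      simp [h]
    have h2 : a = 0 := by
      rw [hadef]
      apply integral_eq_zero_of_ae
      filter_upwards [ae_restrict_of_ae hY0] with ω h
      simp [h]
    rw [h4, h2]
    simp
  · have hm2pos : 0 < m2 := lt_of_le_of_ne hm2 (Ne.symm hm2z)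
    -- d ≥ 1
    have hd1 : 0 < d := by
      rcases Nat.eq_zero_or_pos d with hd0 | h
      · exfalso
        apply hm2z
        subst hd0
        have hY0 : ∀ ω, Y ω = 0 := fun ω => by
          have : X ω = 0 := Subsingleton.elim _ _
          simp [hYdef, this]
        rw [hm2def]
        simp [hY0]
      · exact h
    -- τ ≥ 1 and C > 1
    have hCS0 : m2 ^ 2 ≤ ∫ ω, Y ω ^ 4 ∂μ := by
      have := cs_aux μ hi2 (by simpa [← pow_mul] using hi4)
      simpa [measure_univ, ← pow_mul] using this
    have hτ1 : (1:ℝ) ≤ τ := by nlinarith [hhc u, mul_pos hm2pos hm2pos]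
    have hC1 : (1:ℝ) < C := lt_of_le_of_lt (Real.one_le_sqrt.mpr hτ1) hC
    -- Chebyshev
    have hnormsq : ∀ ω, ‖X ω‖ ^ 2 = ∑ i, X ω i * X ω i := by
      intro ω
      rw [EuclideanSpace.norm_eq, Real.sq_sqrt (Finset.sum_nonneg fun i _ => sq_nonneg _)]
      simp [sq]
    have hnormint : Integrable (fun ω => ‖X ω‖ ^ 2) μ := by
      have : (fun ω => ‖X ω‖ ^ 2) = fun ω => ∑ i, X ω i * X ω i := funext hnormsq
      rw [this]
      exact integrable_finset_sum _ fun i _ => hint2 i i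
    have hnorm2 : ∫ ω, ‖X ω‖ ^ 2 ∂μ ≤ (d:ℝ) := by
      calc ∫ ω, ‖X ω‖ ^ 2 ∂μ = ∑ i, ∫ ω, X ω i * X ω i ∂μ := by
            simp_rw [hnormsq]
            exact integral_finset_sum _ fun i _ => hint2 i i
        _ = Smat.trace := by rw [Matrix.trace]; exact (Finset.sum_congr rfl fun i _ => (hSmat i i).symm)
        _ ≤ (d:ℝ) := htr
    have hq : (μ Aᶜ).toReal ≤ C⁻¹ ^ 2 := by
      have hCd : (C * Real.sqrt d) ^ 2 = C ^ 2 * d := by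
        rw [mul_pow, Real.sq_sqrt (Nat.cast_nonneg d)]
      have hsub : Aᶜ ⊆ {ω | C ^ 2 * (d:ℝ) ≤ ‖X ω‖ ^ 2} := by
        intro ω hω
        simp only [hAdef, Set.mem_compl_iff, Set.mem_setOf_eq, not_le] at hω
        rw [← hCd]
        exact pow_le_pow_left₀ (by positivity) hω.le 2
      have cheb := mul_meas_ge_le_integral_of_nonneg
        (ae_of_all μ fun ω => sq_nonneg ‖X ω‖) hnormint (C ^ 2 * (d:ℝ))
      have hmono : (μ Aᶜ).toReal ≤ (μ {x | C ^ 2 * (d:ℝ) ≤ ‖X x‖ ^ 2}).toReal :=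
        ENNReal.toReal_mono (measure_ne_top μ _) (measure_mono hsub)
      have hdpos : (0:ℝ) < d := by exact_mod_cast hd1
      have h1 : C ^ 2 * (d:ℝ) * (μ Aᶜ).toReal ≤ (d:ℝ) := by
        calc C ^ 2 * (d:ℝ) * (μ Aᶜ).toReal
            ≤ C ^ 2 * (d:ℝ) * (μ {x | C ^ 2 * (d:ℝ) ≤ ‖X x‖ ^ 2}).toReal := by
              apply mul_le_mul_of_nonneg_left hmono (by positivity)
          _ ≤ ∫ ω, ‖X ω‖ ^ 2 ∂μ := cheb
          _ ≤ (d:ℝ) := hnorm2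
      have h2 : C ^ 2 * (μ Aᶜ).toReal ≤ 1 := by
        have := mul_le_mul_of_nonneg_left h1 (le_of_lt (inv_pos.mpr hdpos))
        rw [inv_mul_cancel₀ (ne_of_gt hdpos)] at this
        nlinarith [ENNReal.toReal_nonneg (a := μ Aᶜ)]
      have h3 : (μ Aᶜ).toReal ≤ 1 / C ^ 2 := by
        rw [le_div_iff₀ (by positivity)]
        linarith [h2]
      rw [inv_pow, ← one_div]
      exact h3
    set q := (μ Aᶜ).toReal with hqdef
    have hpq : p + q = 1 := by
      have h := measure_add_measure_compl (μ := μ) hmeasA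
      rw [measure_univ] at h
      have h' := congrArg ENNReal.toReal h
      rwa [ENNReal.toReal_add (measure_ne_top μ _) (measure_ne_top μ _), ENNReal.toReal_one] at h'
    have hq0 : 0 ≤ q := ENNReal.toReal_nonneg
    have hp0 : 0 ≤ p := ENNReal.toReal_nonneg
    have hp1 : p ≤ 1 := by linarith
    have hCinv : C⁻¹ ^ 2 < 1 := by
      rw [inv_pow]
      exact inv_lt_one_of_one_lt₀ (by nlinarith)
    have hppos : 0 < p := by linarith
    have he0 : 0 < 1 - C⁻¹ ^ 2 := by linarith
    set b := ∫ ω in Aᶜ, Y ω ^ 2 ∂μ with hbdef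
    have hsplit2 : a + b = m2 := integral_add_compl hmeasA hi2
    have hsplit4 : f4 + ∫ ω in Aᶜ, Y ω ^ 4 ∂μ = ∫ ω, Y ω ^ 4 ∂μ := integral_add_compl hmeasA hi4
    have h4c0 : 0 ≤ ∫ ω in Aᶜ, Y ω ^ 4 ∂μ :=
      setIntegral_nonneg hmeasA.compl fun ω _ => by positivity
    have hf40 : 0 ≤ f4 := setIntegral_nonneg hmeasA fun ω _ => by positivity
    have ha0 : 0 ≤ a := setIntegral_nonneg hmeasA fun ω _ => sq_nonneg _
    have hb0 : 0 ≤ b := setIntegral_nonneg hmeasA.compl fun ω _ => sq_nonneg _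
    have hm4 : ∫ ω, Y ω ^ 4 ∂μ ≤ τ * m2 ^ 2 := hhc u
    have hf4A : f4 ≤ τ * m2 ^ 2 := by linarith
    have hf4c : ∫ ω in Aᶜ, Y ω ^ 4 ∂μ ≤ τ * m2 ^ 2 := by linarith
    have hb2 : b ^ 2 ≤ q * ∫ ω in Aᶜ, Y ω ^ 4 ∂μ := by
      have h := cs_aux (μ.restrict Aᶜ) hi2.restrict
        (by simpa [← pow_mul] using hi4.restrict (s := Aᶜ))
      simpa [Measure.restrict_apply_univ, ← pow_mul] using h
    have hb2' : b ^ 2 ≤ C⁻¹ ^ 2 * (τ * m2 ^ 2) := by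
      calc b ^ 2 ≤ q * ∫ ω in Aᶜ, Y ω ^ 4 ∂μ := hb2
        _ ≤ C⁻¹ ^ 2 * (τ * m2 ^ 2) := mul_le_mul hq hf4c h4c0 (by positivity)
    set s := Real.sqrt τ / C with hsdef
    have hs0 : 0 ≤ s := by positivity
    have hs1 : s < 1 := (div_lt_one hCpos).mpr hC
    have hbb : b ≤ s * m2 := by
      have hr0 : 0 ≤ s * m2 := mul_nonneg hs0 hm2
      have hsq : (s * m2) ^ 2 = C⁻¹ ^ 2 * (Real.sqrt τ ^ 2 * m2 ^ 2) := by
        rw [hsdef]; ring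
      rw [Real.sq_sqrt hτ.le] at hsq
      have hb2'' : b ^ 2 ≤ (s * m2) ^ 2 := by rw [hsq]; exact hb2'
      exact (pow_le_pow_iff_left₀ hb0 hr0 two_ne_zero).mp hb2''
    have h1s : 0 < 1 - s := by linarith
    have hbsm : b ≤ s * m2 := hbb
    have haM : (1 - s) * m2 ≤ a := by linarith
    have hquad : m2 ^ 2 ≤ ((1 - s)⁻¹) ^ 2 * a ^ 2 := by
      have hm2a : m2 ≤ (1 - s)⁻¹ * a := by
        have h := (le_div_iff₀ h1s).mpr (by linarith : m2 * (1 - s) ≤ a)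
        rwa [div_eq_inv_mul] at h
      calc m2 ^ 2 ≤ ((1 - s)⁻¹ * a) ^ 2 := pow_le_pow_left₀ hm2 hm2a 2
        _ = ((1 - s)⁻¹) ^ 2 * a ^ 2 := by ring
    have hf4a : f4 ≤ τ * (((1 - s)⁻¹) ^ 2 * a ^ 2) := by
      calc f4 ≤ τ * m2 ^ 2 := hf4A
        _ ≤ τ * (((1 - s)⁻¹) ^ 2 * a ^ 2) := mul_le_mul_of_nonneg_left hquad hτ.le
    have hkey : p⁻¹ * τ ≤ (τ / (1 - C⁻¹ ^ 2)) * p⁻¹ ^ 2 := by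
      have hep : 0 ≤ C⁻¹ ^ 2 * p := mul_nonneg (sq_nonneg _) hp0
      have hprod : (1 - C⁻¹ ^ 2) * p ≤ 1 := by linarith
      have hinv : 1 - C⁻¹ ^ 2 ≤ p⁻¹ := by
        have h' := (le_div_iff₀ hppos).mpr hprod
        rwa [one_div] at h'
      rw [div_mul_eq_mul_div, le_div_iff₀ he0]
      have hmul := mul_le_mul_of_nonneg_left hinv (mul_nonneg (inv_nonneg.mpr hp0) hτ.le)
      -- hmul : p⁻¹ * τ * (1 - C⁻¹ ^ 2) ≤ p⁻¹ * τ * p⁻¹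
      calc p⁻¹ * τ * (1 - C⁻¹ ^ 2) ≤ p⁻¹ * τ * p⁻¹ := hmul
        _ = τ * p⁻¹ ^ 2 := by ring
    calc p⁻¹ * f4 ≤ p⁻¹ * (τ * (((1 - s)⁻¹) ^ 2 * a ^ 2)) :=
          mul_le_mul_of_nonneg_left hf4a (inv_nonneg.mpr hp0)
      _ = (p⁻¹ * τ) * (((1 - s)⁻¹) ^ 2 * a ^ 2) := by ring
      _ ≤ ((τ / (1 - C⁻¹ ^ 2)) * p⁻¹ ^ 2) * (((1 - s)⁻¹) ^ 2 * a ^ 2) :=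
          mul_le_mul_of_nonneg_right hkey (by positivity)
      _ = (τ / (1 - C⁻¹ ^ 2)) * ((1 - s)⁻¹) ^ 2 * (p⁻¹ * a) ^ 2 := by ring
end

section
/- For the robust linear regression model Y = ⟨X, w*⟩ + ε in one dimension with P(X = 1) = 1, for any σ > 0 and η ∈ (0,1) there exist two distributions D₁, D₂ over (X,Y), both satisfying bounded-noise conditions (Var(ε) ≤ σ², E[ε]=0, ε independent of X), with total variation distance d_TV(D₁, D₂) ≤ η/2 while the corresponding true parameters satisfy |w₁* − w₂*| ≥ c·σ√η for an absolute constant c > 0. -/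
open MeasureTheory ProbabilityTheory

lemma indepFun_const_aux {Ω : Type*} [MeasurableSpace Ω] (μ : Measure Ω)
    [IsProbabilityMeasure μ] (c : ℝ) (g : Ω → ℝ) :
    IndepFun (fun _ => c) g μ := by
  rw [indepFun_iff_measure_inter_preimage_eq_mul]
  intro s t _ _
  by_cases hc : c ∈ s
  · have : (fun _ : Ω => c) ⁻¹' s = Set.univ := by
      ext x; simp [hc]
    simp [this]
  · have : (fun _ : Ω => c) ⁻¹' s = ∅ := by
      ext x; simp [hc]
    simp [this]

/-- Lower bound for one-dimensional robust linear regression with `X = 1` a.s.: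
for any `σ > 0`, `η ∈ (0,1)` there are two generative distributions over `(X, Y)`
with centered noise of variance at most `σ²`, independent of `X`, whose total
variation distance is at most `η/2`, yet whose true parameters differ by at least
`c·σ·√η` for an absolute constant `c > 0`. -/
theorem robust_regression_lower_bound_heavy_tailed :
    ∃ c : ℝ, 0 < c ∧ ∀ σ η : ℝ, 0 < σ → 0 < η → η < 1 →
      ∃ (D₁ D₂ : Measure (ℝ × ℝ)) (w₁ w₂ : ℝ),
        IsProbabilityMeasure D₁ ∧ IsProbabilityMeasure D₂ ∧
        Measure.map Prod.fst D₁ = Measure.dirac 1 ∧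
        Measure.map Prod.fst D₂ = Measure.dirac 1 ∧
        IndepFun Prod.fst (fun p : ℝ × ℝ => p.2 - w₁ * p.1) D₁ ∧
        IndepFun Prod.fst (fun p : ℝ × ℝ => p.2 - w₂ * p.1) D₂ ∧
        (∫ p : ℝ × ℝ, (p.2 - w₁ * p.1) ∂D₁) = 0 ∧
        (∫ p : ℝ × ℝ, (p.2 - w₂ * p.1) ∂D₂) = 0 ∧
        (∫ p : ℝ × ℝ, (p.2 - w₁ * p.1) ^ 2 ∂D₁) ≤ σ ^ 2 ∧
        (∫ p : ℝ × ℝ, (p.2 - w₂ * p.1) ^ 2 ∂D₂) ≤ σ ^ 2 ∧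
        (∀ s : Set (ℝ × ℝ), MeasurableSet s →
          |(D₁ s).toReal - (D₂ s).toReal| ≤ η / 2) ∧
        c * σ * Real.sqrt η ≤ |w₁ - w₂| := by
  classical
  refine ⟨1/2, by norm_num, fun σ η hσ hη hη1 => ?_⟩
  set p : ℝ := η / 2 with hp
  have hp0 : 0 < p := by positivity
  have hp1 : p < 1 := by simp only [hp]; linarith
  set s : ℝ := Real.sqrt p with hs
  have hs0 : 0 < s := Real.sqrt_pos.mpr hp0
  have hs2 : s ^ 2 = p := Real.sq_sqrt hp0.le
  set y₀ : ℝ := σ / s with hy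
  set w₂ : ℝ := σ * s with hw
  set D₁ : Measure (ℝ × ℝ) := Measure.dirac (1, 0) with hD₁
  set D₂ : Measure (ℝ × ℝ) :=
    ENNReal.ofReal (1 - p) • Measure.dirac ((1 : ℝ), (0 : ℝ))
      + ENNReal.ofReal p • Measure.dirac ((1 : ℝ), y₀) with hD₂
  have hP1 : IsProbabilityMeasure D₁ := by rw [hD₁]; infer_instance
  have hsum : ENNReal.ofReal (1 - p) + ENNReal.ofReal p = 1 := by
    rw [← ENNReal.ofReal_add (by linarith) hp0.le]
    norm_num
  have hP2 : IsProbabilityMeasure D₂ := by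
    constructor
    simp [hD₂, hsum]
  have hmap1 : Measure.map Prod.fst D₁ = Measure.dirac (1 : ℝ) := by
    rw [hD₁, Measure.map_dirac' measurable_fst]
  have hmap2 : Measure.map Prod.fst D₂ = Measure.dirac (1 : ℝ) := by
    rw [hD₂, Measure.map_add _ _ measurable_fst, Measure.map_smul, Measure.map_smul,
      Measure.map_dirac' measurable_fst, Measure.map_dirac' measurable_fst,
      ← add_smul, hsum, one_smul]
  have hfst1 : Prod.fst =ᵐ[D₁] (fun _ => (1 : ℝ)) := by
    rw [hD₁, ae_dirac_eq]
    exact Filter.eventually_pure.mpr rfl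
  have hfst2 : Prod.fst =ᵐ[D₂] (fun _ => (1 : ℝ)) := by
    rw [hD₂]
    rw [Filter.EventuallyEq, MeasureTheory.ae_add_measure_iff]
    constructor <;>
    · apply Measure.ae_smul_measure
      rw [ae_dirac_eq]
      exact Filter.eventually_pure.mpr rfl
  have hind1 : IndepFun Prod.fst (fun q : ℝ × ℝ => q.2 - 0 * q.1) D₁ :=
    (indepFun_const_aux D₁ 1 _).congr hfst1.symm (Filter.EventuallyEq.refl _ _)
  have hind2 : IndepFun Prod.fst (fun q : ℝ × ℝ => q.2 - w₂ * q.1) D₂ :=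
    (indepFun_const_aux D₂ 1 _).congr hfst2.symm (Filter.EventuallyEq.refl _ _)
  -- integrals over D₂
  have hintegral : ∀ f : ℝ × ℝ → ℝ, Measurable f →
      (∫ q, f q ∂D₂) = (1 - p) * f (1, 0) + p * f (1, y₀) := by
    intro f hf
    have hdint : ∀ a : ℝ × ℝ, Integrable f (Measure.dirac a) := by
      intro a
      refine (integrable_const (f a)).congr ?_
      rw [ae_dirac_eq]
      exact Filter.eventually_pure.mpr rfl
    have h1 : Integrable f (ENNReal.ofReal (1 - p) • Measure.dirac ((1:ℝ), (0:ℝ))) :=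
      (hdint _).smul_measure (by simp)
    have h2 : Integrable f (ENNReal.ofReal p • Measure.dirac ((1:ℝ), y₀)) :=
      (hdint _).smul_measure (by simp)
    rw [hD₂, integral_add_measure h1 h2, integral_smul_measure, integral_smul_measure,
      integral_dirac, integral_dirac, ENNReal.toReal_ofReal (by linarith),
      ENNReal.toReal_ofReal hp0.le]
    simp [smul_eq_mul]
  have hpy : p * y₀ = w₂ := by
    rw [hy, hw, ← hs2]
    field_simp
  refine ⟨D₁, D₂, 0, w₂, hP1, hP2, hmap1, hmap2, hind1, hind2, ?_, ?_, ?_, ?_, ?_, ?_⟩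
  · rw [hD₁, integral_dirac]; norm_num
  · rw [hintegral _ (by fun_prop)]
    simp only [hy, hw]
    rw [← hs2]
    field_simp
    ring
  · rw [hD₁, integral_dirac]; norm_num; positivity
  · rw [hintegral _ (by fun_prop)]
    simp only [hy, hw]
    have key : (1 - p) * ((0:ℝ) - σ * s * 1) ^ 2 + p * (σ / s - σ * s * 1) ^ 2
        = σ ^ 2 * (1 - p) := by
      rw [← hs2]
      field_simp
      ring
    rw [key]
    nlinarith [hp0, hσ]
  · intro t ht
    have e1 : (D₁ t).toReal = if ((1:ℝ),(0:ℝ)) ∈ t then 1 else 0 := by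
      rw [hD₁, Measure.dirac_apply' _ ht]
      by_cases h : ((1:ℝ),(0:ℝ)) ∈ t <;> simp [Set.indicator, h]
    have e2 : (D₂ t).toReal = (1 - p) * (if ((1:ℝ),(0:ℝ)) ∈ t then 1 else 0)
        + p * (if ((1:ℝ), y₀) ∈ t then 1 else 0) := by
      have hne1 : ENNReal.ofReal (1 - p) * Measure.dirac ((1:ℝ),(0:ℝ)) t ≠ ⊤ :=
        ENNReal.mul_ne_top ENNReal.ofReal_ne_top (measure_ne_top _ _)
      have hne2 : ENNReal.ofReal p * Measure.dirac ((1:ℝ), y₀) t ≠ ⊤ :=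
        ENNReal.mul_ne_top ENNReal.ofReal_ne_top (measure_ne_top _ _)
      rw [hD₂, Measure.add_apply, Measure.smul_apply, Measure.smul_apply,
        smul_eq_mul, smul_eq_mul, ENNReal.toReal_add hne1 hne2,
        ENNReal.toReal_mul, ENNReal.toReal_mul,
        ENNReal.toReal_ofReal (by linarith : (0:ℝ) ≤ 1 - p),
        ENNReal.toReal_ofReal hp0.le,
        Measure.dirac_apply' _ ht, Measure.dirac_apply' _ ht]
      by_cases h1 : ((1:ℝ),(0:ℝ)) ∈ t <;> by_cases h2 : ((1:ℝ), y₀) ∈ t <;>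
        simp only [Set.indicator_of_mem, Set.indicator_of_notMem, h1, h2, if_pos, if_neg,
          ENNReal.toReal_one, ENNReal.toReal_zero, Pi.one_apply, if_true, if_false,
          not_false_iff]
    rw [e1, e2, abs_le]
    by_cases h1 : ((1:ℝ),(0:ℝ)) ∈ t <;> by_cases h2 : ((1:ℝ), y₀) ∈ t <;>
      simp only [h1, h2, if_true, if_false] <;>
      constructor <;> linarith [hp0, hp1]
  · have : |(0 : ℝ) - w₂| = σ * s := by
      rw [zero_sub, abs_neg, abs_of_nonneg (by positivity)]
    rw [this]
    have h2s : Real.sqrt η ≤ 2 * s := by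
      have h4 : Real.sqrt η ≤ Real.sqrt (4 * p) :=
        Real.sqrt_le_sqrt (by rw [hp]; linarith)
      calc Real.sqrt η ≤ Real.sqrt (4 * p) := h4
        _ = 2 * s := by
            rw [show (4:ℝ) * p = 2 ^ 2 * p by ring,
              Real.sqrt_mul (by positivity), Real.sqrt_sq (by norm_num), hs]
    nlinarith [Real.sqrt_nonneg η, hσ]
end
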